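/- For every sequence of workers σ with all bids b_{ij} ∈ [1, R] and R ≤ εB, the number of tasks assigned by the Online Heterogeneous Algorithm OHA satisfies OPT(σ) ≤ (R·e)^ε · (ln(R) + 3) · ALG_OHA(σ), where OPT(σ) is the maximum size of a budget-feasible assignment for σ. -/

import Mathlib

/-- `P` is a valid assignment of workers (indexed by `Fin n`) to tasks
(indexed by `Fin m`): every assigned task is feasible for its worker, and
each worker and each task appears at most once. -/
def IsAssignment {n m : ℕ} (J : Fin n → Finset (Fin m)) (P : Finset (Fin n × Fin m)) : Prop :=
  (∀ p ∈ P, p.2 ∈ J p.1) ∧ ∀ p ∈ P, ∀ q ∈ P, p ≠ q → p.1 ≠ q.1 ∧ p.2 ≠ q.2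

open scoped Classical in
/-- `OPTval J b B`: the maximum size of a budget-feasible assignment. -/
noncomputable def OPTval {n m : ℕ} (J : Fin n → Finset (Fin m)) (b : Fin n → Fin m → ℝ)
    (B : ℝ) : ℕ :=
  ((Finset.univ : Finset (Finset (Fin n × Fin m))).filter
    fun P => IsAssignment J P ∧ ∑ p ∈ P, b p.1 p.2 ≤ B).sup Finset.card

open scoped Classical in
/-- The Online Heterogeneous Algorithm `OHA`, run on the list of workers `L`, set of
still-unassigned tasks `T` and remaining budget `f` (the total budget being `B`).
The fraction of budget spent so far is `x = (B - f)/B` and the potential function is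
`φ(x) = min ((R e)^(1-x)) R`.  On each worker `i` it computes the set `C_i` of
still-unassigned feasible tasks `j` with `b i j ≤ min f (φ x)`; if `C_i` is nonempty
it assigns the task `choice C_i` to worker `i` and pays her bid.  It returns the
number of assigned tasks. -/
noncomputable def ohaRun {n m : ℕ} (J : Fin n → Finset (Fin m)) (b : Fin n → Fin m → ℝ)
    (choice : Finset (Fin m) → Fin m) (R B : ℝ) :
    List (Fin n) → Finset (Fin m) → ℝ → ℕ
  | [], _, _ => 0
  | i :: rest, T, f =>
    let φ := min ((R * Real.exp 1) ^ (1 - (B - f) / B)) R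
    let C := T.filter fun j => j ∈ J i ∧ b i j ≤ min f φ
    if C.Nonempty then
      ohaRun J b choice R B rest (T.erase (choice C)) (f - b i (choice C)) + 1
    else
      ohaRun J b choice R B rest T f


lemma exp_sub_one_le {u : ℝ} (hu : 0 ≤ u) : Real.exp u - 1 ≤ u * Real.exp u := by
  have h3 := Real.add_one_le_exp (-u)
  have h4 : Real.exp (-u) * Real.exp u = 1 := by rw [← Real.exp_add]; simp
  nlinarith [Real.exp_pos u]

/-- `(e^u-1)/u` is monotone: for `0 ≤ u ≤ t`, `t(e^u-1) ≤ u(e^t-1)`. -/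
lemma exp_conv {u t : ℝ} (hu : 0 ≤ u) (hut : u ≤ t) :
    t * (Real.exp u - 1) ≤ u * (Real.exp t - 1) := by
  have h1 : Real.exp t = Real.exp u * Real.exp (t - u) := by
    rw [← Real.exp_add]; ring_nf
  have h2 := Real.add_one_le_exp (t - u)
  have hA : Real.exp u * (t - u + 1) ≤ Real.exp t := by
    rw [h1]; exact mul_le_mul_of_nonneg_left (by linarith) (Real.exp_pos u).le
  have hB := exp_sub_one_le hu
  nlinarith [mul_le_mul_of_nonneg_left hA hu,
    mul_nonneg (sub_nonneg.2 hut) (by linarith : (0:ℝ) ≤ u * Real.exp u - (Real.exp u - 1))]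

/-- The potential function used to lower bound the number of assignments. -/
noncomputable def Phi (R B Lc x : ℝ) : ℝ :=
  if x ≤ 1/Lc then B*x/R else B/Lc * Real.exp ((x-1)*Lc)

lemma Phi_eq_right {R B Lc x : ℝ} (hLc : 1 ≤ Lc) (hRL : R = Real.exp (Lc - 1))
    (hx : 1/Lc ≤ x) : Phi R B Lc x = B/Lc * Real.exp ((x-1)*Lc) := by
  have hLc0 : (0:ℝ) < Lc := by linarith
  unfold Phi
  split_ifs with h
  · have hxx : x = 1/Lc := le_antisymm h hx
    subst hxx
    have he : (1/Lc - 1)*Lc = -(Lc-1) := by field_simp; ring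
    rw [he, Real.exp_neg, ← hRL]
    have hR0 : (0:ℝ) < R := by rw [hRL]; exact Real.exp_pos _
    field_simp
  · rfl

lemma Phi_zero {R B Lc : ℝ} (hLc : 1 ≤ Lc) : Phi R B Lc 0 = 0 := by
  have h : (0:ℝ) ≤ 1/Lc := by positivity
  unfold Phi
  rw [if_pos h]
  simp

/-- Key step inequality for the potential. -/
lemma Phi_step {R B Lc ε a x δ : ℝ} (hLc : 1 ≤ Lc) (hRL : R = Real.exp (Lc - 1))
    (hB : 0 < B) (hε : 0 < ε) (ha : a = Real.exp (ε*Lc))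
    (hx : 0 ≤ x) (hxδ : x + δ ≤ 1) (hδ0 : 0 ≤ δ) (hδε : δ ≤ ε)
    (hcR : B*δ ≤ R) (hcφ : B*δ ≤ Real.exp ((1-x)*Lc)) :
    Phi R B Lc (x+δ) ≤ Phi R B Lc x + 1 + (a-1)*δ/ε := by
  have hLc0 : (0:ℝ) < Lc := by linarith
  have hR0 : (0:ℝ) < R := by rw [hRL]; exact Real.exp_pos _
  have ha1 : 1 ≤ a := by rw [ha]; nlinarith [Real.add_one_le_exp (ε*Lc)]
  have hlast : (0:ℝ) ≤ (a-1)*δ/ε := div_nonneg (mul_nonneg (by linarith) hδ0) hε.le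
  -- e^{δ Lc} ≤ 1 + (a-1) δ/ε
  have hD : Real.exp (δ*Lc) ≤ 1 + (a-1)*δ/ε := by
    have h1 : (ε*Lc) * (Real.exp (δ*Lc) - 1) ≤ (δ*Lc) * (Real.exp (ε*Lc) - 1) :=
      exp_conv (by positivity) (by nlinarith)
    have h2 : ε * (Real.exp (δ*Lc) - 1) ≤ δ * (Real.exp (ε*Lc) - 1) := by
      have h3 : (ε * (Real.exp (δ*Lc) - 1)) * Lc ≤ (δ * (Real.exp (ε*Lc) - 1)) * Lc := by
        nlinarith [h1]
      exact le_of_mul_le_mul_right h3 hLc0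
    have hgoal : Real.exp (δ*Lc) - 1 ≤ (Real.exp (ε*Lc) - 1) * δ / ε := by
      rw [le_div_iff₀ hε]
      nlinarith [h2]
    rw [ha]; linarith
  by_cases h2 : x + δ ≤ 1/Lc
  · -- both in linear part
    have h1 : x ≤ 1/Lc := by linarith
    unfold Phi
    rw [if_pos h2, if_pos h1]
    have h4 : B*δ/R ≤ 1 := by rw [div_le_one hR0]; exact hcR
    have h5 : B*(x+δ)/R - B*x/R = B*δ/R := by ring
    linarith
  · push_neg at h2
    by_cases h1 : x ≤ 1/Lc
    · -- crossing case
      rw [Phi_eq_right hLc hRL h2.le]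
      unfold Phi; rw [if_pos h1]
      obtain ⟨δ₁, hδ₁⟩ : ∃ y, y = 1/Lc - x := ⟨_, rfl⟩
      obtain ⟨δ₂, hδ₂⟩ : ∃ y, y = x + δ - 1/Lc := ⟨_, rfl⟩
      have hδ₁0 : 0 ≤ δ₁ := by rw [hδ₁]; linarith
      have hδ₂0 : 0 ≤ δ₂ := by rw [hδ₂]; linarith
      have hdelta : δ = δ₁ + δ₂ := by rw [hδ₁, hδ₂]; ring
      have hE : Real.exp ((x+δ-1)*Lc) = Real.exp (δ₂*Lc) / R := by
        rw [hRL, ← Real.exp_sub]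
        congr 1
        rw [hδ₂]
        field_simp
        ring
      rw [hE]
      have hD2 : Real.exp (δ₂*Lc) - 1 ≤ δ₂*Lc * Real.exp (δ₂*Lc) :=
        exp_sub_one_le (by positivity)
      have hD2D : Real.exp (δ₂*Lc) ≤ Real.exp (δ*Lc) :=
        Real.exp_le_exp.2 (by nlinarith)
      have hDD1 : (1:ℝ) ≤ Real.exp (δ*Lc) := Real.one_le_exp (by positivity)
      have key : B/Lc * (Real.exp (δ₂*Lc) / R) ≤ B*x/R + Real.exp (δ*Lc) := by
        have e1 : B/Lc * (Real.exp (δ₂*Lc)/R) - B/(Lc*R) = B/(Lc*R)*(Real.exp (δ₂*Lc)-1) := by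
          field_simp
        have e2 : B*x/R = B/(Lc*R) - B*δ₁/R := by
          rw [hδ₁]; field_simp; ring
        have e3 : B/(Lc*R)*(Real.exp (δ₂*Lc)-1) ≤ (B*δ₂/R)*Real.exp (δ₂*Lc) := by
          rw [div_mul_eq_mul_div, div_mul_eq_mul_div, div_le_div_iff₀ (by positivity) hR0]
          nlinarith [mul_le_mul_of_nonneg_right (mul_le_mul_of_nonneg_left hD2 hB.le) hR0.le,
            mul_pos hLc0 hR0, Real.exp_pos (δ₂*Lc),
            mul_nonneg (mul_nonneg (mul_nonneg hB.le hδ₂0) (Real.exp_nonneg (δ₂*Lc)))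
              (mul_nonneg hR0.le (by linarith : (0:ℝ) ≤ Lc - 1))]
        have e4 : B*δ₁/R + (B*δ₂/R)*Real.exp (δ₂*Lc) ≤ Real.exp (δ*Lc) := by
          have e5 : B*δ₁/R + (B*δ₂/R)*Real.exp (δ₂*Lc)
              = (B*δ₁ + B*δ₂*Real.exp (δ₂*Lc))/R := by ring
          rw [e5, div_le_iff₀ hR0]
          have p1 : (0:ℝ) ≤ B*δ₁*(Real.exp (δ*Lc) - 1) :=
            mul_nonneg (mul_nonneg hB.le hδ₁0) (by linarith)
          have p2 : (0:ℝ) ≤ B*δ₂*(Real.exp (δ*Lc) - Real.exp (δ₂*Lc)) :=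
            mul_nonneg (mul_nonneg hB.le hδ₂0) (by linarith)
          have h6 : B*δ*Real.exp (δ*Lc) ≤ R*Real.exp (δ*Lc) :=
            mul_le_mul_of_nonneg_right hcR (Real.exp_nonneg _)
          have h7 : B*δ*Real.exp (δ*Lc) = B*δ₁*Real.exp (δ*Lc) + B*δ₂*Real.exp (δ*Lc) := by
            rw [hdelta]; ring
          linarith
        linarith
      linarith
    · -- both in exponential part
      push_neg at h1
      rw [Phi_eq_right hLc hRL h1.le, Phi_eq_right hLc hRL (by linarith : 1/Lc ≤ x + δ)]
      have hEadd : Real.exp ((x+δ-1)*Lc) = Real.exp ((x-1)*Lc) * Real.exp (δ*Lc) := by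
        rw [← Real.exp_add]; ring_nf
      have hxE : Real.exp ((x-1)*Lc) * Real.exp ((1-x)*Lc) = 1 := by
        rw [← Real.exp_add, show (x-1)*Lc + (1-x)*Lc = 0 by ring, Real.exp_zero]
      have k1 : B*δ*Real.exp ((x-1)*Lc) ≤ 1 := by
        linarith [mul_le_mul_of_nonneg_right hcφ (Real.exp_nonneg ((x-1)*Lc)), hxE]
      rw [hEadd]
      have k3 : Real.exp (δ*Lc) - 1 ≤ δ*Lc*Real.exp (δ*Lc) := exp_sub_one_le (by positivity)
      have k5 : (B*δ*Real.exp ((x-1)*Lc))*Real.exp (δ*Lc) ≤ Real.exp (δ*Lc) := by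
        have := mul_le_mul_of_nonneg_right k1 (Real.exp_nonneg (δ*Lc))
        linarith
      have k2 : B/Lc * (Real.exp ((x-1)*Lc) * Real.exp (δ*Lc)) - B/Lc * Real.exp ((x-1)*Lc)
          = B/Lc * Real.exp ((x-1)*Lc) * (Real.exp (δ*Lc) - 1) := by ring
      have k4 : B/Lc * Real.exp ((x-1)*Lc) * (Real.exp (δ*Lc) - 1)
          ≤ B/Lc * Real.exp ((x-1)*Lc) * (δ*Lc*Real.exp (δ*Lc)) := by
        apply mul_le_mul_of_nonneg_left k3
        positivity
      have k6 : B/Lc * Real.exp ((x-1)*Lc) * (δ*Lc*Real.exp (δ*Lc))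
          = (B*δ*Real.exp ((x-1)*Lc))*Real.exp (δ*Lc) := by
        field_simp
      linarith

lemma one_le_Re {R : ℝ} (hR : 1 ≤ R) : (1:ℝ) ≤ R * Real.exp 1 := by
  have h : (1:ℝ) + 1 ≤ Real.exp 1 := by have := Real.add_one_le_exp 1; linarith
  nlinarith

lemma rpow_Re_eq {R : ℝ} (hR : 1 ≤ R) (y : ℝ) :
    (R * Real.exp 1) ^ y = Real.exp (y * (Real.log R + 1)) := by
  rw [Real.rpow_def_of_pos (by positivity), Real.log_mul (by linarith) (Real.exp_ne_zero 1),
    Real.log_exp, mul_comm]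

lemma thresh_mono {R B f f' : ℝ} (hB : 0 < B) (hR : 1 ≤ R) (h : f' ≤ f) :
    min f' (min ((R * Real.exp 1) ^ (1 - (B - f') / B)) R)
      ≤ min f (min ((R * Real.exp 1) ^ (1 - (B - f) / B)) R) := by
  refine min_le_min h (min_le_min ?_ le_rfl)
  apply Real.rpow_le_rpow_of_exponent_le (one_le_Re hR)
  have : (B - f)/B ≤ (B - f')/B := by gcongr <;> linarith
  linarith

open scoped Classical in
lemma ohaRun_spec {n m : ℕ} (J : Fin n → Finset (Fin m)) (b : Fin n → Fin m → ℝ)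
    (choice : Finset (Fin m) → Fin m) (hchoice : ∀ s : Finset (Fin m), s.Nonempty → choice s ∈ s)
    (R B ε : ℝ) (hB : 0 < B) (hR : 1 ≤ R) (hRB : R ≤ ε * B) (hε : 0 < ε)
    (hbids : ∀ i, ∀ j ∈ J i, 1 ≤ b i j ∧ b i j ≤ R) :
    ∀ (L : List (Fin n)), L.Nodup → ∀ (T : Finset (Fin m)) (f : ℝ), 0 ≤ f → f ≤ B →
    ∃ (T' : Finset (Fin m)) (f' : ℝ) (W : Finset (Fin n)),
      T' ⊆ T ∧ 0 ≤ f' ∧ f' ≤ f ∧ (∀ i ∈ W, i ∈ L) ∧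
      W.card = ohaRun J b choice R B L T f ∧
      (T \ T').card = ohaRun J b choice R B L T f ∧
      f - f' ≤ (ohaRun J b choice R B L T f : ℝ) * R ∧
      Phi R B (Real.log R + 1) ((B - f')/B) ≤ Phi R B (Real.log R + 1) ((B - f)/B)
        + (ohaRun J b choice R B L T f : ℝ)
        + (Real.exp (ε*(Real.log R + 1)) - 1) * ((f - f')/B) / ε ∧
      (∀ i ∈ L, i ∉ W → ∀ j ∈ J i, j ∈ T' →
        min f' (min ((R * Real.exp 1) ^ (1 - (B - f') / B)) R) < b i j) := by
  have hLc1 : (1:ℝ) ≤ Real.log R + 1 := by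
    have := Real.log_nonneg hR; linarith
  have hRL : R = Real.exp (Real.log R + 1 - 1) := by
    rw [add_sub_cancel_right, Real.exp_log (by linarith)]
  intro L
  induction L with
  | nil =>
    intro _ T f hf0 hfB
    refine ⟨T, f, ∅, le_refl _, hf0, le_refl _, by simp, by simp [ohaRun], by simp [ohaRun],
      by simp [ohaRun], by simp [ohaRun], by simp⟩
  | cons i rest ih =>
    intro hnd T f hf0 hfB
    obtain ⟨hi_rest, hnd'⟩ := List.nodup_cons.1 hnd
    by_cases hC : (T.filter fun j => j ∈ J i ∧ b i j ≤
        min f (min ((R * Real.exp 1) ^ (1 - (B - f) / B)) R)).Nonempty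
    · -- accept branch
      have hj0C := hchoice _ hC
      obtain ⟨j0, hj0eq⟩ : ∃ j0, choice (T.filter fun j => j ∈ J i ∧ b i j ≤
        min f (min ((R * Real.exp 1) ^ (1 - (B - f) / B)) R)) = j0 := ⟨_, rfl⟩
      rw [hj0eq, Finset.mem_filter] at hj0C
      obtain ⟨hj0T, hj0J, hj0b⟩ := hj0C
      have hrun : ohaRun J b choice R B (i :: rest) T f
          = ohaRun J b choice R B rest (T.erase j0) (f - b i j0) + 1 := by
        simp only [ohaRun]
        rw [if_pos hC, hj0eq]
      have hb1 : 1 ≤ b i j0 := (hbids i j0 hj0J).1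
      have hbf : b i j0 ≤ f := le_trans hj0b (min_le_left _ _)
      have hbR : b i j0 ≤ R := le_trans hj0b (le_trans (min_le_right _ _) (min_le_right _ _))
      have hbφ : b i j0 ≤ Real.exp ((1 - (B-f)/B) * (Real.log R + 1)) := by
        have h := le_trans hj0b (le_trans (min_le_right _ _) (min_le_left _ _))
        rwa [rpow_Re_eq hR (1 - (B - f)/B)] at h
      obtain ⟨T', f', W, hT'sub, hf'0, hf'le, hWmem, hWcard, hTcard, hspend, hPhi, hrej⟩ :=
        ih hnd' (T.erase j0) (f - b i j0) (by linarith) (by linarith)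
      have hiW : i ∉ W := fun h => hi_rest (hWmem i h)
      refine ⟨T', f', insert i W, ?_, hf'0, by linarith, ?_, ?_, ?_, ?_, ?_, ?_⟩
      · exact hT'sub.trans (Finset.erase_subset _ _)
      · intro w hw
        rcases Finset.mem_insert.1 hw with h | h
        · simp [h]
        · exact List.mem_cons_of_mem _ (hWmem w h)
      · rw [hrun, Finset.card_insert_of_notMem hiW, hWcard]
      · rw [hrun]
        have hsplit : T \ T' = insert j0 ((T.erase j0) \ T') := by
          ext x
          simp only [Finset.mem_sdiff, Finset.mem_insert, Finset.mem_erase]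
          constructor
          · rintro ⟨hxT, hxT'⟩
            by_cases hx : x = j0
            · exact Or.inl hx
            · exact Or.inr ⟨⟨hx, hxT⟩, hxT'⟩
          · rintro (rfl | ⟨⟨_, hxT⟩, hxT'⟩)
            · exact ⟨hj0T, fun h => (Finset.mem_erase.1 (hT'sub h)).1 rfl⟩
            · exact ⟨hxT, hxT'⟩
        rw [hsplit, Finset.card_insert_of_notMem (by simp), hTcard]
      · rw [hrun]
        push_cast
        nlinarith
      · rw [hrun]
        have hstep : Phi R B (Real.log R + 1) ((B - (f - b i j0))/B)
            ≤ Phi R B (Real.log R + 1) ((B - f)/B) + 1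
              + (Real.exp (ε*(Real.log R + 1)) - 1) * (b i j0 / B) / ε := by
          have hxx : (B - (f - b i j0))/B = (B - f)/B + b i j0 / B := by
            field_simp
            ring
          rw [hxx]
          apply Phi_step hLc1 hRL hB hε rfl
          · apply div_nonneg (by linarith) hB.le
          · rw [← add_div, div_le_one hB]; linarith
          · positivity
          · rw [div_le_iff₀ hB]
            nlinarith
          · rw [mul_div_assoc', mul_div_cancel_left₀ _ (ne_of_gt hB)]
            exact hbR
          · rw [mul_div_assoc', mul_div_cancel_left₀ _ (ne_of_gt hB)]
            exact hbφ
        have he1 : (0:ℝ) ≤ Real.exp (ε*(Real.log R + 1)) - 1 := by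
          nlinarith [Real.add_one_le_exp (ε*(Real.log R + 1)), mul_nonneg hε.le (by linarith : (0:ℝ) ≤ Real.log R + 1)]
        have hsum : (f - f')/B = (f - b i j0 - f')/B + b i j0/B := by ring
        push_cast
        rw [hsum]
        have hexpand : (Real.exp (ε*(Real.log R + 1)) - 1) * ((f - b i j0 - f')/B + b i j0/B) / ε
            = (Real.exp (ε*(Real.log R + 1)) - 1) * ((f - b i j0 - f')/B) / ε
              + (Real.exp (ε*(Real.log R + 1)) - 1) * (b i j0/B) / ε := by ring
        rw [hexpand]
        linarith
      · intro w hw hwW j hjJ hjT'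
        rcases List.mem_cons.1 hw with rfl | hwrest
        · exact absurd (Finset.mem_insert_self w W) hwW
        · exact hrej w hwrest (fun h => hwW (Finset.mem_insert_of_mem h)) j hjJ hjT'
    · -- reject branch
      have hrun : ohaRun J b choice R B (i :: rest) T f = ohaRun J b choice R B rest T f := by
        simp only [ohaRun]
        rw [if_neg hC]
      obtain ⟨T', f', W, hT'sub, hf'0, hf'le, hWmem, hWcard, hTcard, hspend, hPhi, hrej⟩ :=
        ih hnd' T f hf0 hfB
      refine ⟨T', f', W, hT'sub, hf'0, hf'le, fun w hw => List.mem_cons_of_mem _ (hWmem w hw),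
        by rw [hrun]; exact hWcard, by rw [hrun]; exact hTcard, by rw [hrun]; exact hspend,
        by rw [hrun]; exact hPhi, ?_⟩
      intro w hw hwW j hjJ hjT'
      rcases List.mem_cons.1 hw with rfl | hwrest
      · -- w = i was rejected: C empty
        have hjT : j ∈ T := hT'sub hjT'
        have : ¬ (j ∈ J w ∧ b w j ≤ min f (min ((R * Real.exp 1) ^ (1 - (B - f) / B)) R)) := by
          intro hcon
          exact hC ⟨j, Finset.mem_filter.2 ⟨hjT, hcon⟩⟩
        push_neg at this
        have hgt := this hjJ
        calc min f' (min ((R * Real.exp 1) ^ (1 - (B - f') / B)) R)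
            ≤ min f (min ((R * Real.exp 1) ^ (1 - (B - f) / B)) R) := thresh_mono hB hR hf'le
          _ < b w j := hgt
      · exact hrej w hwrest hwW j hjJ hjT'

set_option maxHeartbeats 1000000 in
lemma main_calc (B R ε f' Lc a x φ : ℝ) (k N : ℕ)
    (hB2 : 2 ≤ B) (hR : 1 ≤ R) (hRB : R ≤ ε*B) (hε : 0 < ε)
    (hf0 : 0 ≤ f') (hfB : f' ≤ B) (hk1 : 1 ≤ k)
    (hLcdef : Lc = Real.log R + 1) (hadef : a = Real.exp (ε*Lc))
    (hxdef : x = (B-f')/B) (hφdef : φ = min (Real.exp ((1 - x)*Lc)) R)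
    (hNτ : (N:ℝ) * min (max f' 1) φ ≤ B)
    (hNτ2 : (N:ℝ) * min (max f' 1) φ ≤ (k:ℝ)*R + f')
    (hkR : B - f' ≤ (k:ℝ)*R)
    (hPhi : Phi R B Lc x ≤ (k:ℝ) + (a - 1) * (x/ε))
    (hmin : 1 ≤ N → min f' φ < R) :
    (N:ℝ) ≤ (a*Lc + 2*a - 2) * k := by
  have hB0 : (0:ℝ) < B := by linarith
  have hR0 : (0:ℝ) < R := by linarith
  have hLc1 : (1:ℝ) ≤ Lc := by rw [hLcdef]; have := Real.log_nonneg hR; linarith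
  have hLc0 : (0:ℝ) < Lc := by linarith
  have hεLc : (0:ℝ) ≤ ε*Lc := by positivity
  have hRL : R = Real.exp (Lc - 1) := by
    rw [hLcdef, add_sub_cancel_right, Real.exp_log hR0]
  have ha1 : (1:ℝ) ≤ a := by
    rw [hadef]; linarith [Real.add_one_le_exp (ε*Lc)]
  have hat : ε*Lc ≤ a - 1 := by
    rw [hadef]; linarith [Real.add_one_le_exp (ε*Lc)]
  have hx0 : (0:ℝ) ≤ x := by rw [hxdef]; apply div_nonneg (by linarith) hB0.le
  have hx1 : x ≤ 1 := by rw [hxdef, div_le_one hB0]; linarith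
  have hφ1 : (1:ℝ) ≤ φ := by
    rw [hφdef]
    refine le_min (Real.one_le_exp ?_) hR
    have : (0:ℝ) ≤ 1 - x := by linarith
    positivity
  have hφR : φ ≤ R := by rw [hφdef]; exact min_le_right _ _
  have h1k : (1:ℝ) ≤ (k:ℝ) := by exact_mod_cast hk1
  have hk0 : (0:ℝ) < (k:ℝ) := by linarith
  have hkx : x/ε ≤ (k:ℝ) := by
    rw [div_le_iff₀ hε, hxdef, div_le_iff₀ hB0]
    have h1 : (k:ℝ)*R ≤ (k:ℝ)*(ε*B) := by
      apply mul_le_mul_of_nonneg_left hRB (by positivity)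
    linarith [h1, hkR]
  have hkv : (B - f')/R ≤ (k:ℝ) := by rw [div_le_iff₀ hR0]; exact hkR
  have hcoeff1 : (1:ℝ) ≤ a*Lc + 2*a - 2 := by
    have h2 : (1:ℝ)*1 ≤ a*Lc := mul_le_mul ha1 hLc1 zero_le_one (by linarith)
    linarith
  by_cases hN0 : N = 0
  · subst hN0
    push_cast
    have h8 := mul_nonneg (by linarith : (0:ℝ) ≤ a*Lc + 2*a - 2) (Nat.cast_nonneg k)
    linarith
  have hN1 : 1 ≤ N := Nat.one_le_iff_ne_zero.2 hN0
  have hNr : (1:ℝ) ≤ (N:ℝ) := by exact_mod_cast hN1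
  have hminR := hmin hN1
  by_cases hcaseI : φ ≤ max f' 1
  · -- Case I : τ = φ
    rw [min_eq_right hcaseI] at hNτ hNτ2
    rcases le_or_gt (1/Lc) x with hx0' | hx0'
    · -- I.a
      have hxLc : (1:ℝ) ≤ x*Lc := by
        rw [div_le_iff₀ hLc0] at hx0'; linarith
      have hexpR : Real.exp ((1 - x)*Lc) ≤ R := by
        rw [hRL]
        have h9 : (1-x)*Lc ≤ Lc - 1 := by linarith [hxLc]
        exact Real.exp_le_exp.2 h9
      have hφe : φ = Real.exp ((1 - x)*Lc) := by rw [hφdef]; exact min_eq_left hexpR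
      rw [hφe] at hNτ
      have hEE : Real.exp ((1 - x)*Lc) * Real.exp ((x-1)*Lc) = 1 := by
        rw [← Real.exp_add, show (1-x)*Lc + (x-1)*Lc = 0 by ring, Real.exp_zero]
      have hNB : (N:ℝ) ≤ B * Real.exp ((x-1)*Lc) := by
        have hmul := mul_le_mul_of_nonneg_right hNτ (Real.exp_nonneg ((x-1)*Lc))
        have hNE := congrArg (fun z => (N:ℝ)*z) hEE
        simp only [mul_one] at hNE
        linarith [hmul, hNE]
      have hPhiEq := Phi_eq_right (B := B) hLc1 hRL hx0'
      have hPhi' : B * Real.exp ((x-1)*Lc) ≤ Lc*(k:ℝ) + Lc*((a-1)*(x/ε)) := by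
        have h2 := mul_le_mul_of_nonneg_left hPhi hLc0.le
        rw [hPhiEq] at h2
        have h3 : Lc * (B/Lc * Real.exp ((x-1)*Lc)) = B * Real.exp ((x-1)*Lc) := by
          field_simp
        rw [h3] at h2
        linarith [h2]
      have ht1 : Lc*((a-1)*(x/ε)) ≤ Lc*((a-1)*(k:ℝ)) := by
        apply mul_le_mul_of_nonneg_left _ hLc0.le
        apply mul_le_mul_of_nonneg_left hkx (by linarith)
      have hp : (0:ℝ) ≤ (a-1)*(k:ℝ) := mul_nonneg (by linarith) hk0.le
      linarith [hNB, hPhi', ht1, hp]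
    · -- I.b
      have hxLc : x*Lc < 1 := by
        rw [lt_div_iff₀ hLc0] at hx0'; linarith
      have hRexp : R ≤ Real.exp ((1 - x)*Lc) := by
        rw [hRL]
        have h9 : Lc - 1 ≤ (1-x)*Lc := by linarith [hxLc]
        exact Real.exp_le_exp.2 h9
      have hφe : φ = R := by rw [hφdef]; exact min_eq_right hRexp
      have hf'R : f' < R := by
        rw [hφe] at hminR
        by_contra h
        push_neg at h
        rw [min_eq_right h] at hminR
        exact lt_irrefl _ hminR
      rcases le_or_gt 1 f' with hf1 | hf1
      · rw [max_eq_left hf1, hφe] at hcaseI; linarith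
      · have hReq : R = 1 := by
          rw [max_eq_right hf1.le, hφe] at hcaseI
          linarith
        rw [hφe, hReq] at hNτ2
        have hNk : (N:ℝ) ≤ (k:ℝ) := by
          have h6 : (N:ℝ) < (k:ℝ) + 1 := by linarith [hNτ2]
          have h7 : N < k + 1 := by exact_mod_cast h6
          exact_mod_cast Nat.lt_succ_iff.1 h7
        have hq := mul_nonneg (by linarith : (0:ℝ) ≤ a*Lc + 2*a - 2 - 1) hk0.le
        linarith [hNk, hq]
  · -- Case II : τ = max f' 1
    push_neg at hcaseI
    rw [min_eq_left hcaseI.le] at hNτ hNτ2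
    have hM1 : (1:ℝ) ≤ max f' 1 := le_max_right _ _
    have hM0 : (0:ℝ) < max f' 1 := by linarith
    have hMf : f' ≤ max f' 1 := le_max_left _ _
    have hf'R : f' < R := lt_of_lt_of_le (lt_of_le_of_lt hMf hcaseI) hφR
    have hR1 : (1:ℝ) < R := lt_of_lt_of_le (lt_of_le_of_lt hM1 hcaseI) hφR
    have hLcR : (1:ℝ) < Lc := by
      rw [hLcdef]
      have := Real.log_pos hR1
      linarith
    rcases lt_or_ge (B/2) f' with hf2 | hf2
    · -- II.alpha : N ≤ 1
      have hNle : N ≤ 1 := by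
        by_contra hh
        push_neg at hh
        have h2N : (2:ℝ) ≤ (N:ℝ) := by exact_mod_cast hh
        have h3 := mul_le_mul_of_nonneg_right h2N hM0.le
        linarith [hNτ, h3, hMf]
      have hNle' : (N:ℝ) ≤ 1 := by exact_mod_cast hNle
      have h4 := mul_le_mul_of_nonneg_left h1k (by linarith : (0:ℝ) ≤ a*Lc + 2*a - 2)
      linarith [hNle', hcoeff1, h4]
    · -- f' ≤ B/2
      have hxhalf : (1:ℝ)/2 ≤ x := by
        rw [hxdef, le_div_iff₀ hB0]; linarith
      have hkB : B ≤ 2*R*(k:ℝ) := by linarith [hkR]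
      rcases le_or_gt (1/Lc) x with hx0' | hx0'
      · -- II.beta
        have hPhiEq := Phi_eq_right (B := B) hLc1 hRL hx0'
        have hv0 : (0:ℝ) ≤ (B - f')/R := div_nonneg (by linarith) hR0.le
        have hPhi' : B * Real.exp ((x-1)*Lc) ≤ Lc*(k:ℝ) + Lc*((a-1)*(x/ε)) := by
          have h2 := mul_le_mul_of_nonneg_left hPhi hLc0.le
          rw [hPhiEq] at h2
          have h3 : Lc * (B/Lc * Real.exp ((x-1)*Lc)) = B * Real.exp ((x-1)*Lc) := by
            field_simp
          rw [h3] at h2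
          linarith [h2]
        have ht1 : Lc*((a-1)*(x/ε)) ≤ Lc*((a-1)*(k:ℝ)) := by
          apply mul_le_mul_of_nonneg_left _ hLc0.le
          apply mul_le_mul_of_nonneg_left hkx (by linarith)
        have ht2 : 2*(a-1)*((B-f')/R) ≤ 2*(a-1)*(k:ℝ) := by
          apply mul_le_mul_of_nonneg_left hkv (by linarith)
        have hW1 : B * Real.exp ((x-1)*Lc) + 2*(a-1)*((B-f')/R)
            ≤ (a*Lc + 2*a - 2)*(k:ℝ) := by linarith [hPhi', ht1, ht2]
        have hE2 : Real.exp (-((ε*Lc)*(f'/R))) ≤ Real.exp ((x-1)*Lc) := by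
          apply Real.exp_le_exp.2
          have h4 : (f'/B)*Lc ≤ (ε*Lc)*(f'/R) := by
            have e3 : (f'/B)*Lc = (f'*Lc)/B := by ring
            have e4 : (ε*Lc)*(f'/R) = (ε*Lc*f')/R := by ring
            rw [e3, e4, div_le_div_iff₀ hB0 hR0]
            nlinarith [mul_le_mul_of_nonneg_left hRB (mul_nonneg hf0 hLc0.le)]
          have h5 : (x-1)*Lc = -((f'/B)*Lc) := by rw [hxdef]; field_simp; ring
          rw [h5]
          linarith
        have hMe : 1 - (ε*Lc)*(f'/R) ≤ (max f' 1) * Real.exp (-((ε*Lc)*(f'/R))) := by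
          have h6 := Real.add_one_le_exp (-((ε*Lc)*(f'/R)))
          have h7 := mul_nonneg (by linarith : (0:ℝ) ≤ max f' 1 - 1)
            (Real.exp_pos (-((ε*Lc)*(f'/R)))).le
          linarith
        have hBf2M : B*f' ≤ 2*(max f' 1)*(B - f') := by
          linarith [mul_nonneg hM0.le (by linarith : (0:ℝ) ≤ B - 2*f'),
            mul_nonneg hB0.le (sub_nonneg.2 hMf)]
        have hts : B*((ε*Lc)*(f'/R)) ≤ 2*(max f' 1)*(a-1)*((B - f')/R) := by
          have p1 : B*f'*((ε*Lc)/R) ≤ 2*(max f' 1)*(B-f')*((ε*Lc)/R) :=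
            mul_le_mul_of_nonneg_right hBf2M (by positivity)
          have p2 : 2*(max f' 1)*(B-f')*((ε*Lc)/R) ≤ 2*(max f' 1)*(B-f')*((a-1)/R) := by
            apply mul_le_mul_of_nonneg_left _ (mul_nonneg (by linarith : (0:ℝ) ≤ 2*(max f' 1)) (by linarith : (0:ℝ) ≤ B-f'))
            exact div_le_div_of_nonneg_right hat hR0.le
          have e1 : B*((ε*Lc)*(f'/R)) = B*f'*((ε*Lc)/R) := by ring
          have e2 : 2*(max f' 1)*(a-1)*((B - f')/R) = 2*(max f' 1)*(B-f')*((a-1)/R) := by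
            ring
          rw [e1, e2]
          exact p1.trans p2
        have hclaim : B ≤ (max f' 1) * (B * Real.exp ((x-1)*Lc) + 2*(a-1)*((B-f')/R)) := by
          have q1 := mul_le_mul_of_nonneg_left hMe hB0.le
          have q2 : B*((max f' 1) * Real.exp (-((ε*Lc)*(f'/R))))
              ≤ B*((max f' 1) * Real.exp ((x-1)*Lc)) := by
            apply mul_le_mul_of_nonneg_left _ hB0.le
            exact mul_le_mul_of_nonneg_left hE2 hM0.le
          linarith [q1, q2, hts]
        have hfin : (N:ℝ) * (max f' 1) ≤ ((a*Lc + 2*a - 2)*(k:ℝ)) * (max f' 1) := by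
          have h8 := hclaim.trans (mul_le_mul_of_nonneg_left hW1 hM0.le)
          linarith [hNτ, h8]
        exact le_of_mul_le_mul_right hfin hM0
      · -- II.gamma
        have hxLc1 : x*Lc < 1 := by
          rw [lt_div_iff₀ hLc0] at hx0'; linarith
        have hLc2 : Lc < 2 := by
          have h9 := mul_le_mul_of_nonneg_right hxhalf hLc0.le
          linarith [hxLc1, h9]
        have hBf : B*(Lc - 1) < f'*Lc := by
          have h10 : (B-f')*Lc < B := by
            rw [hxdef] at hxLc1
            rw [div_mul_eq_mul_div, div_lt_one hB0] at hxLc1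
            exact hxLc1
          linarith
        have hKEY : R*(6*Lc - 3*Lc^2 - 2) ≤ Lc^2 := by
          rcases le_or_gt (6*Lc - 3*Lc^2 - 2) 0 with hneg | hpos
          · have := mul_nonpos_of_nonneg_of_nonpos hR0.le hneg
            linarith [this, sq_nonneg Lc]
          · obtain ⟨y, hy⟩ : ∃ y, y = Lc - 1 := ⟨_, rfl⟩
            have hy0 : 0 < y := by rw [hy]; linarith
            have hy1 : y < 1 := by rw [hy]; linarith
            have hey : Real.exp y * (1 - y) ≤ 1 := by
              have h7 := Real.add_one_le_exp (-y)
              have h8 : Real.exp (-y) * Real.exp y = 1 := by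
                rw [← Real.exp_add]; simp
              have h9 := mul_le_mul_of_nonneg_right (by linarith : 1 - y ≤ Real.exp (-y))
                (Real.exp_pos y).le
              linarith
            have h3y : 0 < 1 - 3*y^2 := by rw [hy]; linarith [hpos]
            have g1 : Real.exp y * (1 - 3*y^2) * (1 - y) ≤ 1 - 3*y^2 := by
              have := mul_le_mul_of_nonneg_left hey h3y.le
              linarith [this]
            have g2 : 1 - 3*y^2 ≤ (1+y)^2 * (1 - y) := by
              have h11 : y^2*y ≤ y^2*1 := mul_le_mul_of_nonneg_left hy1.le (sq_nonneg y)
              linarith [sq_nonneg y, hy0.le, h11]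
            have g3 : Real.exp y * (1 - 3*y^2) * (1-y) ≤ (1+y)^2 * (1-y) := by linarith
            have g4 : Real.exp y * (1 - 3*y^2) ≤ (1+y)^2 :=
              le_of_mul_le_mul_right g3 (by linarith : (0:ℝ) < 1 - y)
            have e1 : 6*Lc - 3*Lc^2 - 2 = 1 - 3*y^2 := by rw [hy]; ring
            have e2 : Lc^2 = (1+y)^2 := by rw [hy]; ring
            have e3 : Real.exp (Lc-1) = Real.exp y := by rw [hy]
            rw [hRL, e1, e2, e3]
            exact g4
        have haRLB : R*Lc ≤ (a-1)*B := by
          have p := mul_le_mul_of_nonneg_right hat hB0.le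
          have q := mul_le_mul_of_nonneg_right hRB hLc0.le
          linarith [p, q]
        have hcoeffB : Lc*B + 3*R*Lc ≤ (a*Lc + 2*a - 2)*B := by
          have h9 : Lc + 3*(a-1) ≤ a*Lc + 2*a - 2 := by
            linarith [mul_nonneg (by linarith : (0:ℝ) ≤ a-1) (by linarith : (0:ℝ) ≤ Lc-1)]
          have h12 := mul_le_mul_of_nonneg_right h9 hB0.le
          linarith [h12, haRLB]
        rcases le_or_gt 1 f' with hf1 | hf1
        · -- M = f'
          rw [max_eq_left hf1] at hNτ2
          have hf'0 : (0:ℝ) < f' := by linarith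
          have step1 : R*Lc ≤ f'*Lc*Lc + R*(3*Lc-2)*(Lc-1) := by
            have h13 : (1:ℝ)*Lc^2 ≤ f'*Lc^2 := mul_le_mul_of_nonneg_right hf1 (sq_nonneg Lc)
            linarith [hKEY, h13]
          have step2 : R*Lc*B ≤ f'*Lc*Lc*B + R*(3*Lc-2)*(f'*Lc) := by
            have r1 := mul_le_mul_of_nonneg_right step1 hB0.le
            have r2 : R*(3*Lc-2)*(B*(Lc-1)) ≤ R*(3*Lc-2)*(f'*Lc) :=
              mul_le_mul_of_nonneg_left hBf.le (mul_nonneg hR0.le (by linarith))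
            linarith [r1, r2]
          have C2 : R*B + 2*R*f' ≤ f'*Lc*B + 3*R*Lc*f' := by
            have r3 : Lc*(R*B + 2*R*f') ≤ Lc*(f'*Lc*B + 3*R*Lc*f') := by linarith [step2]
            exact le_of_mul_le_mul_left r3 hLc0
          have C1 : (k:ℝ)*R + f' ≤ ((a*Lc + 2*a - 2)*(k:ℝ))*f' := by
            have u1 : ((k:ℝ)*R + f')*B ≤ (k:ℝ)*(R*B + 2*R*f') := by
              linarith [mul_le_mul_of_nonneg_left hkB hf0]
            have u2 : (k:ℝ)*(R*B + 2*R*f') ≤ (k:ℝ)*(f'*Lc*B + 3*R*Lc*f') :=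
              mul_le_mul_of_nonneg_left C2 hk0.le
            have u3 : (k:ℝ)*(f'*Lc*B + 3*R*Lc*f') ≤ (((a*Lc + 2*a - 2)*(k:ℝ))*f')*B := by
              have r4 : (Lc*B + 3*R*Lc)*((k:ℝ)*f') ≤ ((a*Lc + 2*a - 2)*B)*((k:ℝ)*f') :=
                mul_le_mul_of_nonneg_right hcoeffB (by positivity)
              linarith [r4]
            have u4 := (u1.trans u2).trans u3
            exact le_of_mul_le_mul_right (by linarith [u4]) hB0
          have hNf : (N:ℝ)*f' ≤ (((a*Lc + 2*a - 2)*(k:ℝ)))*f' := le_trans hNτ2 C1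
          exact le_of_mul_le_mul_right hNf hf'0
        · -- M = 1
          rw [max_eq_right hf1.le] at hNτ2
          have step1 : R*Lc ≤ Lc*Lc + R*(3*Lc-2)*(Lc-1) := by linarith [hKEY]
          have step2 : R*Lc*B ≤ Lc*Lc*B + R*(3*Lc-2)*(f'*Lc) := by
            have r1 := mul_le_mul_of_nonneg_right step1 hB0.le
            have r2 : R*(3*Lc-2)*(B*(Lc-1)) ≤ R*(3*Lc-2)*(f'*Lc) :=
              mul_le_mul_of_nonneg_left hBf.le (mul_nonneg hR0.le (by linarith))
            linarith [r1, r2]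
          have C2 : R*B + 2*R*f' ≤ Lc*B + 3*R*Lc*f' := by
            have r3 : Lc*(R*B + 2*R*f') ≤ Lc*(Lc*B + 3*R*Lc*f') := by linarith [step2]
            exact le_of_mul_le_mul_left r3 hLc0
          have C1 : (k:ℝ)*R + f' ≤ (a*Lc + 2*a - 2)*(k:ℝ) := by
            have u1 : ((k:ℝ)*R + f')*B ≤ (k:ℝ)*(R*B + 2*R*f') := by
              linarith [mul_le_mul_of_nonneg_left hkB hf0]
            have u2 : (k:ℝ)*(R*B + 2*R*f') ≤ (k:ℝ)*(Lc*B + 3*R*Lc*f') :=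
              mul_le_mul_of_nonneg_left C2 hk0.le
            have u3 : (k:ℝ)*(Lc*B + 3*R*Lc*f') ≤ ((a*Lc + 2*a - 2)*(k:ℝ))*B := by
              have h14 : (0:ℝ) ≤ 3*R*Lc := by positivity
              have h15 : 3*R*Lc*f' ≤ 3*R*Lc := by
                have := mul_le_mul_of_nonneg_left hf1.le h14
                linarith
              have r5 : (k:ℝ)*(Lc*B + 3*R*Lc*f') ≤ (k:ℝ)*(Lc*B + 3*R*Lc) := by
                apply mul_le_mul_of_nonneg_left _ hk0.le
                linarith
              have r4 : (Lc*B + 3*R*Lc)*(k:ℝ) ≤ ((a*Lc + 2*a - 2)*B)*(k:ℝ) :=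
                mul_le_mul_of_nonneg_right hcoeffB hk0.le
              linarith [r4, r5]
            have u4 := (u1.trans u2).trans u3
            exact le_of_mul_le_mul_right (by linarith [u4]) hB0
          have hone : (N:ℝ)*1 = (N:ℝ) := mul_one _
          rw [hone] at hNτ2
          linarith [hNτ2, C1]

set_option maxHeartbeats 1000000 in
/-- For every sequence of workers with all bids in `[1, R]` and
`R ≤ ε B`, and every fixed tie-breaking rule `choice`, the number of tasks assigned by
the Online Heterogeneous Algorithm `OHA` satisfies
`OPT ≤ (R·e)^ε * (ln R + 3) * ALG_OHA`. -/
theorem online_heterogeneous {n m : ℕ} (J : Fin n → Finset (Fin m))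
    (b : Fin n → Fin m → ℝ) (R ε B : ℝ) (hB : 0 < B) (hR : 1 ≤ R)
    (hbids : ∀ i, ∀ j ∈ J i, 1 ≤ b i j ∧ b i j ≤ R) (hRB : R ≤ ε * B)
    (choice : Finset (Fin m) → Fin m)
    (hchoice : ∀ s : Finset (Fin m), s.Nonempty → choice s ∈ s) :
    (OPTval J b B : ℝ) ≤
      (R * Real.exp 1) ^ ε * (Real.log R + 3) *
        (ohaRun J b choice R B (List.finRange n) Finset.univ B : ℝ) := by
  classical
  have hε : 0 < ε := by nlinarith
  have hLc1 : (1:ℝ) ≤ Real.log R + 1 := by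
    have := Real.log_nonneg hR; linarith
  have hL3 : (0:ℝ) ≤ Real.log R + 3 := by linarith
  have hrpε : (R * Real.exp 1) ^ ε = Real.exp (ε * (Real.log R + 1)) := by
    rw [rpow_Re_eq hR ε, mul_comm]
  have ha1 : (1:ℝ) ≤ Real.exp (ε * (Real.log R + 1)) :=
    Real.one_le_exp (by positivity)
  -- extract an optimal assignment P
  obtain ⟨P, hPmem, hOPTeq⟩ : ∃ P, (IsAssignment J P ∧ ∑ p ∈ P, b p.1 p.2 ≤ B) ∧
      OPTval J b B = P.card := by
    unfold OPTval
    have hne : ((Finset.univ : Finset (Finset (Fin n × Fin m))).filter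
        fun P => IsAssignment J P ∧ ∑ p ∈ P, b p.1 p.2 ≤ B).Nonempty := by
      refine ⟨∅, Finset.mem_filter.2 ⟨Finset.mem_univ _, ⟨⟨?_, ?_⟩, ?_⟩⟩⟩
      · intro p hp; exact absurd hp (Finset.notMem_empty p)
      · intro p hp; exact absurd hp (Finset.notMem_empty p)
      · simp; linarith
    obtain ⟨P, hPS, hPsup⟩ := Finset.exists_mem_eq_sup _ hne Finset.card
    exact ⟨P, (Finset.mem_filter.1 hPS).2, hPsup⟩
  obtain ⟨⟨hPfeas, hPinj⟩, hPsum⟩ := hPmem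
  have hPbid1 : ∀ p ∈ P, 1 ≤ b p.1 p.2 := fun p hp => (hbids p.1 p.2 (hPfeas p hp)).1
  have hPbidR : ∀ p ∈ P, b p.1 p.2 ≤ R := fun p hp => (hbids p.1 p.2 (hPfeas p hp)).2
  -- run the algorithm
  obtain ⟨T', f', W, hT'sub, hf'0, hf'le, hWmem, hWcard, hTcard, hspend, hPhi0, hrej⟩ :=
    ohaRun_spec J b choice hchoice R B ε hB hR hRB hε hbids (List.finRange n)
      (List.nodup_finRange n) Finset.univ B (le_of_lt hB) le_rfl
  set k := ohaRun J b choice R B (List.finRange n) Finset.univ B with hkdef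
  have hkR : B - f' ≤ (k:ℝ)*R := hspend
  have hPhi : Phi R B (Real.log R + 1) ((B - f')/B)
      ≤ (k:ℝ) + (Real.exp (ε*(Real.log R + 1)) - 1) * (((B - f')/B)/ε) := by
    have h0 : (B - B)/B = 0 := by rw [sub_self, zero_div]
    rw [h0, Phi_zero hLc1] at hPhi0
    have h1 : (Real.exp (ε*(Real.log R + 1)) - 1) * ((B - f')/B) / ε
        = (Real.exp (ε*(Real.log R + 1)) - 1) * (((B - f')/B)/ε) := by ring
    linarith [hPhi0, h1.le, h1.ge]
  -- the set of pairs rejected by threshold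
  set Q := P.filter (fun p => p.1 ∉ W ∧ p.2 ∈ T') with hQdef
  have hQsub : Q ⊆ P := Finset.filter_subset _ _
  have hQsum : ∑ q ∈ Q, b q.1 q.2 ≤ B :=
    le_trans (Finset.sum_le_sum_of_subset_of_nonneg hQsub
      (fun p hp _ => by linarith [hPbid1 p hp])) hPsum
  have hQrej : ∀ q ∈ Q,
      min f' (min (Real.exp ((1 - (B - f')/B) * (Real.log R + 1))) R) < b q.1 q.2 := by
    intro q hq
    have h1 := hrej q.1 (List.mem_finRange _) (Finset.mem_filter.1 hq).2.1 q.2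
      (hPfeas q (hQsub hq)) (Finset.mem_filter.1 hq).2.2
    rwa [rpow_Re_eq hR (1 - (B - f')/B)] at h1
  set τ := min (max f' 1) (min (Real.exp ((1 - (B - f')/B) * (Real.log R + 1))) R) with hτdef
  have hτle : ∀ q ∈ Q, τ ≤ b q.1 q.2 := by
    intro q hq
    have h1 := hQrej q hq
    have h2 := hPbid1 q (hQsub hq)
    rcases le_total f' (min (Real.exp ((1 - (B - f')/B) * (Real.log R + 1))) R) with h | h
    · rw [min_eq_left h] at h1
      exact le_trans (min_le_left _ _) (max_le h1.le h2)
    · rw [min_eq_right h] at h1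
      exact le_trans (min_le_right _ _) h1.le
  have hNτ : (Q.card : ℝ) * τ ≤ B := by
    have h3 := Finset.card_nsmul_le_sum Q _ τ hτle
    rw [nsmul_eq_mul] at h3
    linarith [hQsum]
  have hNτ2 : (Q.card : ℝ) * τ ≤ (k:ℝ)*R + f' := by linarith [hNτ, hkR]
  -- counting
  have hA1 : (P.filter (fun p => p.1 ∈ W)).card ≤ W.card := by
    apply Finset.card_le_card_of_injOn Prod.fst
    · intro p hp; exact (Finset.mem_filter.1 hp).2
    · intro p hp q hq he
      by_contra hne
      exact (hPinj p (Finset.mem_filter.1 (Finset.mem_coe.1 hp)).1 q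
        (Finset.mem_filter.1 (Finset.mem_coe.1 hq)).1 hne).1 he
  have hA2 : (P.filter (fun p => p.2 ∉ T')).card ≤ (Finset.univ \ T').card := by
    apply Finset.card_le_card_of_injOn Prod.snd
    · intro p hp
      exact Finset.mem_sdiff.2 ⟨Finset.mem_univ _, (Finset.mem_filter.1 hp).2⟩
    · intro p hp q hq he
      by_contra hne
      exact (hPinj p (Finset.mem_filter.1 (Finset.mem_coe.1 hp)).1 q
        (Finset.mem_filter.1 (Finset.mem_coe.1 hq)).1 hne).2 he
  have hsubP : P ⊆ (P.filter (fun p => p.1 ∈ W))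
      ∪ ((P.filter (fun p => p.2 ∉ T')) ∪ Q) := by
    intro p hp
    by_cases h1 : p.1 ∈ W
    · exact Finset.mem_union_left _ (Finset.mem_filter.2 ⟨hp, h1⟩)
    · by_cases h2 : p.2 ∈ T'
      · exact Finset.mem_union_right _ (Finset.mem_union_right _
          (Finset.mem_filter.2 ⟨hp, h1, h2⟩))
      · exact Finset.mem_union_right _ (Finset.mem_union_left _
          (Finset.mem_filter.2 ⟨hp, h2⟩))
  have hcount : P.card ≤ k + (k + Q.card) := by
    calc P.card ≤ ((P.filter (fun p => p.1 ∈ W))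
        ∪ ((P.filter (fun p => p.2 ∉ T')) ∪ Q)).card := Finset.card_le_card hsubP
      _ ≤ (P.filter (fun p => p.1 ∈ W)).card
          + ((P.filter (fun p => p.2 ∉ T')) ∪ Q).card := Finset.card_union_le _ _
      _ ≤ (P.filter (fun p => p.1 ∈ W)).card
          + ((P.filter (fun p => p.2 ∉ T')).card + Q.card) :=
        Nat.add_le_add_left (Finset.card_union_le _ _) _
      _ ≤ k + (k + Q.card) := by
        have := hA1.trans_eq hWcard
        have := hA2.trans_eq hTcard
        omega
  have hcountR : (P.card : ℝ) ≤ (k:ℝ) + ((k:ℝ) + (Q.card:ℝ)) := by exact_mod_cast hcount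
  -- trivial case : P empty
  rcases Nat.eq_zero_or_pos P.card with hP0 | hPpos
  · rw [hOPTeq, hP0]
    push_cast
    have h5 : (0:ℝ) ≤ (R * Real.exp 1) ^ ε * (Real.log R + 3) * (k:ℝ) := by
      apply mul_nonneg (mul_nonneg (Real.rpow_nonneg (by positivity) ε) hL3) (Nat.cast_nonneg k)
    linarith
  · have hPne : P.Nonempty := Finset.card_pos.1 hPpos
    -- the algorithm assigns at least one task
    have hk1 : 1 ≤ k := by
      by_contra hk0'
      push_neg at hk0'
      have hk0 : k = 0 := by omega
      obtain ⟨p, hp⟩ := hPne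
      have hW0 : W = ∅ := Finset.card_eq_zero.1 (hWcard.trans hk0)
      have hT'univ : ∀ j, j ∈ T' := by
        have h6 : Finset.univ \ T' = ∅ := Finset.card_eq_zero.1 (hTcard.trans hk0)
        intro j
        by_contra hj
        have : j ∈ Finset.univ \ T' := Finset.mem_sdiff.2 ⟨Finset.mem_univ _, hj⟩
        rw [h6] at this
        exact Finset.notMem_empty _ this
      have hf'B : f' = B := by
        have : B - f' ≤ (0:ℝ)*R := by rw [hkdef] at hk0; rw [← Nat.cast_zero, ← hk0]; exact hkR
        have h7 : f' ≤ B := hf'le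
        nlinarith
      have h8 := hrej p.1 (List.mem_finRange _) (by rw [hW0]; exact Finset.notMem_empty _)
        p.2 (hPfeas p hp) (hT'univ p.2)
      rw [hf'B] at h8
      have h9 : (1 : ℝ) - (B - B)/B = 1 := by rw [sub_self, zero_div, sub_zero]
      rw [h9, Real.rpow_one] at h8
      have h10 : min (R * Real.exp 1) R = R := by
        apply min_eq_right
        nlinarith [Real.add_one_le_exp (1:ℝ)]
      rw [h10] at h8
      have hble : b p.1 p.2 ≤ B := by
        have := Finset.single_le_sum (f := fun q => b q.1 q.2)
          (fun q hq => by linarith [hPbid1 q hq]) hp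
        linarith [hPsum]
      exact absurd h8 (not_lt.2 (le_min hble (hPbidR p hp)))
    have hk1R : (1:ℝ) ≤ (k:ℝ) := by exact_mod_cast hk1
    rcases lt_or_ge B 2 with hB2 | hB2
    · -- B < 2 : OPT ≤ 1
      have hP1 : P.card ≤ 1 := by
        by_contra hh
        push_neg at hh
        have h11 : (2:ℝ) ≤ (P.card:ℝ) := by exact_mod_cast hh
        have h12 := Finset.card_nsmul_le_sum P (fun q => b q.1 q.2) 1 (fun q hq => hPbid1 q hq)
        rw [nsmul_eq_mul, mul_one] at h12
        linarith [hPsum]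
      have hP1R : (P.card:ℝ) ≤ 1 := by exact_mod_cast hP1
      rw [hOPTeq]
      have h13 : (1:ℝ) ≤ (R * Real.exp 1) ^ ε * (Real.log R + 3) * (k:ℝ) := by
        rw [hrpε]
        have e1 : (1:ℝ)*3 ≤ Real.exp (ε*(Real.log R + 1)) * (Real.log R + 3) :=
          mul_le_mul ha1 (by linarith [Real.log_nonneg hR]) (by norm_num) (by positivity)
        have e2 : (1:ℝ)*1 ≤ (Real.exp (ε*(Real.log R + 1)) * (Real.log R + 3)) * (k:ℝ) :=
          mul_le_mul (by linarith) hk1R zero_le_one (by linarith)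
        linarith
      linarith
    · -- main case
      have hmain := main_calc B R ε f' (Real.log R + 1) (Real.exp (ε*(Real.log R + 1)))
        ((B - f')/B) (min (Real.exp ((1 - (B - f')/B) * (Real.log R + 1))) R) k Q.card
        hB2 hR hRB hε hf'0 (by linarith : f' ≤ B) hk1 rfl rfl rfl ?_ hNτ hNτ2 hkR hPhi ?_
      · rw [hOPTeq, hrpε]
        have hfinal : Real.exp (ε*(Real.log R + 1)) * (Real.log R + 3) * (k:ℝ)
            = 2*(k:ℝ) + ((Real.exp (ε*(Real.log R + 1)) * (Real.log R + 1)
              + 2*Real.exp (ε*(Real.log R + 1)) - 2) * (k:ℝ)) := by ring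
        rw [hfinal]
        linarith [hcountR, hmain]
      · rfl
      · intro hQ1
        obtain ⟨q, hq⟩ := Finset.card_pos.1 hQ1
        have h14 := hQrej q hq
        exact lt_of_lt_of_le h14 (hPbidR q (hQsub hq))
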